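/- Let A be a perfect MV-algebra. If x ≤ ¬x and y ≤ ¬y, then x ⊕ y ≤ ¬(x ⊕ y). That is, the radical {x : x ≤ ¬x} is closed under ⊕. -/
import Mathlib


/-- An MV-algebra `(A, ⊕, ¬, 0)`. -/
class MV (A : Type*) where
  op : A → A → A
  neg : A → A
  zero : A
  op_assoc : ∀ x y z : A, op (op x y) z = op x (op y z)
  op_comm : ∀ x y : A, op x y = op y x
  op_zero : ∀ x : A, op x zero = x
  neg_neg : ∀ x : A, neg (neg x) = x
  op_neg_zero : ∀ x : A, op x (neg zero) = neg zero
  mv6 : ∀ x y : A, op (neg (op (neg x) y)) y = op (neg (op (neg y) x)) x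

namespace MV

variable {A : Type*} [MV A]

/-- `1 := ¬0`. -/
def one : A := neg zero

/-- `x ⊙ y := ¬(¬x ⊕ ¬y)`. -/
def odot (x y : A) : A := neg (op (neg x) (neg y))

/-- `sup(x,y) := (x ⊙ ¬y) ⊕ y`. -/
def ssup (x y : A) : A := op (odot x (neg y)) y

/-- `inf(x,y) := (x ⊕ ¬y) ⊙ y`. -/
def sinf (x y : A) : A := odot (op x (neg y)) y

/-- `x ≤ y` iff `¬x ⊕ y = 1`. -/
def le (x y : A) : Prop := op (neg x) y = one

/-- `x ≤ y` iff `inf(x,y) = x`. -/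
def leInf (x y : A) : Prop := sinf x y = x

/-- `n`-fold sum `nx = x ⊕ ⋯ ⊕ x`. -/
def nsm : ℕ → A → A
  | 0, _ => zero
  | n + 1, x => op x (nsm n x)

/-- `x² := x ⊙ x`. -/
def sq (x : A) : A := odot x x

end MV

namespace MV

/-- A perfect MV-algebra: nontrivial, satisfying `x² ⊕ x² = (x ⊕ x)²` and,
for every `x`, either `x ≤ ¬x` or `¬x ≤ x`. -/
def Perfect (A : Type*) [MV A] : Prop :=
  (zero : A) ≠ one ∧
  (∀ x : A, op (sq x) (sq x) = sq (op x x)) ∧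
  (∀ x : A, le x (neg x) ∨ le (neg x) x)

end MV

namespace MV

variable {A : Type*} [MV A]

lemma neg_one : (neg (one : A)) = zero := neg_neg zero

lemma op_one (x : A) : op x (one : A) = one := op_neg_zero x

lemma zero_op (x : A) : op (zero : A) x = x := by rw [op_comm, op_zero]

lemma one_op (x : A) : op (one : A) x = one := by rw [op_comm, op_one]

lemma neg_inj {x y : A} (h : neg x = neg y) : x = y := by
  rw [← neg_neg x, h, neg_neg]

lemma neg_op_self (x : A) : op (neg x) x = one := by
  have h := mv6 x (one : A)
  rw [op_one, neg_one, zero_op] at h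
  exact h.symm

lemma le_antisymm {x y : A} (h1 : le x y) (h2 : le y x) : x = y := by
  have h := mv6 x y
  rw [le] at h1 h2
  rw [h1, h2, neg_one, zero_op, zero_op] at h
  exact h.symm

lemma le_rep {a b : A} (h : le a b) : b = op a (neg (op (neg b) a)) := by
  have h6 := mv6 a b
  rw [le] at h
  rw [h, neg_one, zero_op, op_comm] at h6
  exact h6

lemma op_le_op_right {a b : A} (c : A) (h : le a b) : le (op a c) (op b c) := by
  rw [le_rep h]
  show op (neg (op a c)) (op (op a (neg (op (neg b) a))) c) = one
  rw [op_assoc a (neg (op (neg b) a)) c, op_comm (neg (op (neg b) a)) c,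
    ← op_assoc a c, ← op_assoc, neg_op_self, one_op]

lemma eq_one_of_one_le {z : A} (h : le (one : A) z) : z = one := by
  rw [le, neg_one, zero_op] at h; exact h

lemma sq_eq_zero_iff {x : A} : sq x = zero ↔ le x (neg x) := by
  constructor
  · intro h
    rw [sq, odot] at h
    rw [le]
    have := congrArg neg h
    rwa [neg_neg] at this
  · intro h
    rw [le] at h
    rw [sq, odot, h, neg_one]

lemma radical_double (h2 : ∀ x : A, op (sq x) (sq x) = sq (op x x))
    {x : A} (hx : le x (neg x)) : le (op x x) (neg (op x x)) := by
  rw [← sq_eq_zero_iff] at hx ⊢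
  rw [← h2, hx, op_zero]

end MV

open MV in
/-- In a perfect MV-algebra, the radical `{x : x ≤ ¬x}` is closed under `⊕`. -/
theorem perfect_radical_op_closed {A : Type*} [MV A] (hA : Perfect A) :
    ∀ x y : A, le x (neg x) → le y (neg y) → le (op x y) (neg (op x y)) := by
  obtain ⟨hnt, h2, h3⟩ := hA
  intro x y hx hy
  rcases h3 (op x y) with h | h
  · exact h
  · exfalso
    rw [MV.le, MV.neg_neg] at h
    have hXY : op (op x x) (op y y) = one := by
      rw [← h, MV.op_assoc x y (op x y), ← MV.op_assoc y x y, MV.op_comm y x,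
        MV.op_assoc x y y, ← MV.op_assoc x x (op y y)]
    have hX : MV.le (op x x) (neg (op x x)) := MV.radical_double h2 hx
    have hY : MV.le (op y y) (neg (op y y)) := MV.radical_double h2 hy
    have l1 : MV.le (op x x) (op y y) := by
      have m := MV.op_le_op_right (op y y) hX
      rw [hXY] at m
      exact MV.eq_one_of_one_le m
    have l2 : MV.le (op y y) (op x x) := by
      have hYX : op (op y y) (op x x) = one := by rw [MV.op_comm]; exact hXY
      have m := MV.op_le_op_right (op x x) hY
      rw [hYX] at m
      exact MV.eq_one_of_one_le m
    have hEq : op x x = op y y := MV.le_antisymm l1 l2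
    rw [← hEq] at hXY
    have hs : MV.sq (op x x) = zero := MV.sq_eq_zero_iff.mpr hX
    have hc := h2 (op x x)
    rw [hs, MV.op_zero, hXY] at hc
    have hone : MV.sq (one : A) = one := by rw [MV.sq, MV.odot, MV.neg_one, MV.zero_op]; rfl
    rw [hone] at hc
    exact hnt hc
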